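/- arXiv:2006.04548 — 5 statements merged into one kernel-verified Lean document; each statement's English description precedes it below -/
import Mathlib

section
/- Let ε and η be independent square-integrable random vectors in ℝⁿ and ℝ^D respectively, with E[ε] = 0, E[η] = 0, E[εεᵀ] = σ²·I_n and E[ηηᵀ] = α²·I_D. Then the perturbed MAP estimator w* := (1/σ²)A⁻¹Φ(y + ε) + (1/α²)A⁻¹η satisfies E[(w* − w̄)(w* − w̄)ᵀ] = A⁻¹, i.e. its covariance matrix equals the posterior covariance of the Bayesian linear model. -/
open Matrix MeasureTheory ProbabilityTheory

/-- Let `ε` and `η` be independent square-integrable random vectors in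
`ℝⁿ` and `ℝᴰ` with `E[ε] = 0`, `E[η] = 0`, `E[εεᵀ] = σ² I_n` and `E[ηηᵀ] = α² I_D`.
Then the perturbed MAP estimator `w* := (1/σ²) A⁻¹ Φ (y + ε) + (1/α²) A⁻¹ η` satisfies
`E[(w* − w̄)(w* − w̄)ᵀ] = A⁻¹`, i.e. its covariance matrix equals the posterior
covariance of the Bayesian linear model. -/
theorem covariance_perturbed_map_eq_posterior_covariance
    {D n : ℕ} (σ α : ℝ) (hσ : 0 < σ) (hα : 0 < α)
    (Φ : Matrix (Fin D) (Fin n) ℝ) (y : Fin n → ℝ)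
    (A : Matrix (Fin D) (Fin D) ℝ)
    (hA : A = (1 / σ ^ 2) • (Φ * Φᵀ) + (1 / α ^ 2) • (1 : Matrix (Fin D) (Fin D) ℝ))
    (wbar : Fin D → ℝ) (hwbar : wbar = (1 / σ ^ 2) • (A⁻¹ *ᵥ (Φ *ᵥ y)))
    {Ω : Type*} [MeasurableSpace Ω] (P : Measure Ω) [IsProbabilityMeasure P]
    (ε : Ω → Fin n → ℝ) (η : Ω → Fin D → ℝ)
    (hεmeas : Measurable ε) (hηmeas : Measurable η)
    (hεsq : ∀ i, MemLp (fun ω => ε ω i) 2 P)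
    (hηsq : ∀ j, MemLp (fun ω => η ω j) 2 P)
    (hindep : IndepFun ε η P)
    (hεmean : ∀ i, ∫ ω, ε ω i ∂P = 0)
    (hηmean : ∀ j, ∫ ω, η ω j ∂P = 0)
    (hεcov : ∀ i i', ∫ ω, ε ω i * ε ω i' ∂P = if i = i' then σ ^ 2 else 0)
    (hηcov : ∀ j j', ∫ ω, η ω j * η ω j' ∂P = if j = j' then α ^ 2 else 0)
    (wstar : Ω → Fin D → ℝ)
    (hwstar : ∀ ω, wstar ω =
      (1 / σ ^ 2) • (A⁻¹ *ᵥ (Φ *ᵥ (y + ε ω))) + (1 / α ^ 2) • (A⁻¹ *ᵥ η ω)) :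
    ∀ j k, ∫ ω, (wstar ω j - wbar j) * (wstar ω k - wbar k) ∂P = A⁻¹ j k := by
  classical
  have hσ2 : (σ : ℝ) ^ 2 ≠ 0 := by positivity
  have hα2 : (α : ℝ) ^ 2 ≠ 0 := by positivity
  -- A is positive definite, hence invertible
  have hps : ((1 / σ ^ 2) • (Φ * Φᵀ)).PosSemidef := by
    have heq : ((1 / σ) • Φ) * ((1 / σ) • Φ)ᴴ = (1 / σ ^ 2) • (Φ * Φᵀ) := by
      ext i j
      simp only [Matrix.mul_apply, Matrix.smul_apply, Matrix.conjTranspose_apply,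
        Matrix.transpose_apply, smul_eq_mul, star_trivial, Finset.mul_sum]
      exact Finset.sum_congr rfl fun l _ => by ring
    rw [← heq]
    exact Matrix.posSemidef_self_mul_conjTranspose _
  have hpd1 : ((1 / α ^ 2) • (1 : Matrix (Fin D) (Fin D) ℝ)).PosDef := by
    rw [Matrix.smul_one_eq_diagonal]
    exact Matrix.PosDef.diagonal fun _ => by positivity
  have hApd : A.PosDef := hA ▸ Matrix.PosDef.posSemidef_add hps hpd1
  have hdet : IsUnit A.det := (Matrix.isUnit_iff_isUnit_det A).1 hApd.isUnit
  have hAinv : A⁻¹ * A = 1 := Matrix.nonsing_inv_mul A hdet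
  have hAinv' : A * A⁻¹ = 1 := Matrix.mul_nonsing_inv A hdet
  have hAsymm : Aᵀ = A := by
    rw [hA]
    simp [Matrix.transpose_add, Matrix.transpose_smul, Matrix.transpose_mul,
      Matrix.transpose_one]
  have hAinvsymm : (A⁻¹)ᵀ = A⁻¹ := by
    rw [Matrix.transpose_nonsing_inv, hAsymm]
  set B : Matrix (Fin D) (Fin n) ℝ := (1 / σ ^ 2) • (A⁻¹ * Φ) with hB
  set C : Matrix (Fin D) (Fin D) ℝ := (1 / α ^ 2) • A⁻¹ with hC
  -- the key matrix identity
  have hmat : σ ^ 2 • (B * Bᵀ) + α ^ 2 • (C * Cᵀ) = A⁻¹ := by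
    have e1 : σ ^ 2 • (B * Bᵀ) = A⁻¹ * ((1 / σ ^ 2) • (Φ * Φᵀ)) * A⁻¹ := by
      rw [hB, Matrix.transpose_smul, Matrix.transpose_mul, hAinvsymm]
      simp only [Matrix.smul_mul, Matrix.mul_smul, smul_smul, Matrix.mul_assoc]
      congr 1
      field_simp
    have e2 : α ^ 2 • (C * Cᵀ) = A⁻¹ * ((1 / α ^ 2) • (1 : Matrix (Fin D) (Fin D) ℝ)) * A⁻¹ := by
      rw [hC, Matrix.transpose_smul, hAinvsymm]
      simp only [Matrix.smul_mul, Matrix.mul_smul, smul_smul, Matrix.mul_one,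
        Matrix.one_mul, Matrix.mul_assoc]
      congr 1
      field_simp
    rw [e1, e2, ← Matrix.add_mul, ← Matrix.mul_add, ← hA, hAinv, Matrix.one_mul]
  intro j k
  -- combined random vector and coefficient matrix
  set X : Ω → (Fin n ⊕ Fin D) → ℝ := fun ω => Sum.elim (ε ω) (η ω) with hX
  set M : Fin D → (Fin n ⊕ Fin D) → ℝ := fun j => Sum.elim (B j) (C j) with hM
  have hXsq : ∀ s, MemLp (fun ω => X ω s) 2 P := by
    rintro (i | l)
    · exact hεsq i
    · exact hηsq l
  have hXint : ∀ s t, Integrable (fun ω => X ω s * X ω t) P := by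
    intro s t
    have h := (((hXsq t).smul (hXsq s)
      (p := 2) (q := 2) (r := 1)).integrable le_rfl)
    exact h
  have hXcov : ∀ s t, ∫ ω, X ω s * X ω t ∂P =
      if s = t then Sum.elim (fun _ : Fin n => σ ^ 2) (fun _ : Fin D => α ^ 2) s else 0 := by
    have hind : ∀ (i : Fin n) (l : Fin D),
        IndepFun (fun ω => ε ω i) (fun ω => η ω l) P :=
      fun i l => hindep.comp (measurable_pi_apply i) (measurable_pi_apply l)
    rintro (i | l) (i' | l')
    · simpa [hX] using hεcov i i'
    · have h := (hind i l').integral_fun_mul_eq_mul_integral (hεsq i).aestronglyMeasurable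
        (hηsq l').aestronglyMeasurable
      simpa [hX, hεmean i, hηmean l'] using h
    · have h := ((hind i' l).symm).integral_fun_mul_eq_mul_integral (hηsq l).aestronglyMeasurable
        (hεsq i').aestronglyMeasurable
      simpa [hX, hεmean i', hηmean l] using h
    · simpa [hX] using hηcov l l'
  -- expand the difference entries
  have hdiff : ∀ ω (j : Fin D), wstar ω j - wbar j = ∑ s, M j s * X ω s := by
    intro ω j
    have hsum : (∑ s, M j s * X ω s) = (B *ᵥ ε ω) j + (C *ᵥ η ω) j := by
      rw [Fintype.sum_sum_type]
      simp [hM, hX, Matrix.mulVec, dotProduct]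
    rw [hsum, hwstar, hwbar, hB, hC]
    simp only [Matrix.mulVec_add, Matrix.smul_mulVec, ← Matrix.mulVec_mulVec,
      Pi.add_apply, Pi.smul_apply, smul_eq_mul]
    ring
  have hprod : ∀ ω, (wstar ω j - wbar j) * (wstar ω k - wbar k)
      = ∑ s, ∑ t, M j s * M k t * (X ω s * X ω t) := by
    intro ω
    rw [hdiff ω j, hdiff ω k, Finset.sum_mul_sum]
    exact Finset.sum_congr rfl fun s _ => Finset.sum_congr rfl fun t _ => by ring
  calc ∫ ω, (wstar ω j - wbar j) * (wstar ω k - wbar k) ∂P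
      = ∫ ω, ∑ s, ∑ t, M j s * M k t * (X ω s * X ω t) ∂P := by
        exact integral_congr_ae (Filter.Eventually.of_forall hprod)
    _ = ∑ s, ∑ t, M j s * M k t * ∫ ω, X ω s * X ω t ∂P := by
        rw [integral_finset_sum _ (fun s _ =>
          integrable_finset_sum _ (fun t _ => (hXint s t).const_mul _))]
        refine Finset.sum_congr rfl fun s _ => ?_
        rw [integral_finset_sum _ (fun t _ => (hXint s t).const_mul _)]
        exact Finset.sum_congr rfl fun t _ => integral_const_mul _ _
    _ = ∑ s, M j s * M k s * Sum.elim (fun _ : Fin n => σ ^ 2) (fun _ : Fin D => α ^ 2) s := by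
        refine Finset.sum_congr rfl fun s _ => ?_
        simp_rw [hXcov]
        simp [mul_ite, mul_zero, Finset.sum_ite_eq]
    _ = σ ^ 2 * (∑ i, B j i * B k i) + α ^ 2 * (∑ l, C j l * C k l) := by
        rw [Fintype.sum_sum_type, Finset.mul_sum, Finset.mul_sum]
        congr 1
        · exact Finset.sum_congr rfl fun i _ => by simp [hM]; ring
        · exact Finset.sum_congr rfl fun l _ => by simp [hM]; ring
    _ = A⁻¹ j k := by
        have h := congrFun (congrFun hmat j) k
        simpa [Matrix.add_apply, Matrix.smul_apply, Matrix.mul_apply,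
          Matrix.transpose_apply, smul_eq_mul, Finset.mul_sum] using h
end

section
/- If ε and η are independent random vectors whose laws are the centered multivariate Gaussian measures with covariance matrices σ²·I_n on ℝⁿ and α²·I_D on ℝ^D respectively, then the law of the perturbed MAP estimator w* := (1/σ²)A⁻¹Φ(y + ε) + (1/α²)A⁻¹η is the multivariate Gaussian measure on ℝ^D with mean w̄ and covariance matrix A⁻¹, i.e. w* is distributed exactly according to the Bayesian posterior of the linear model. -/
open Matrix MeasureTheory ProbabilityTheory

/-- The multivariate Gaussian measure on `ℝᵈ` with mean vector `μ` and covariance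
matrix `S`, defined through its density with respect to Lebesgue measure. -/
noncomputable def multivariateGaussian {d : ℕ} (μ : Fin d → ℝ)
    (S : Matrix (Fin d) (Fin d) ℝ) : Measure (Fin d → ℝ) :=
  volume.withDensity fun x =>
    ENNReal.ofReal
      ((Real.sqrt ((2 * Real.pi) ^ d * S.det))⁻¹ *
        Real.exp (-((x - μ) ⬝ᵥ (S⁻¹ *ᵥ (x - μ))) / 2))

open scoped ENNReal

namespace MVGaussAux

variable {ι κ ρ : Type*} [Fintype ι] [DecidableEq ι] [Fintype κ] [DecidableEq κ]
  [Fintype ρ] [DecidableEq ρ]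

/-- real-valued Gaussian density -/
noncomputable def gdensR (ι : Type*) [Fintype ι] [DecidableEq ι] (μ : ι → ℝ) (S : Matrix ι ι ℝ) (x : ι → ℝ) : ℝ :=
  (Real.sqrt ((2 * Real.pi) ^ (Fintype.card ι) * S.det))⁻¹ *
    Real.exp (-((x - μ) ⬝ᵥ (S⁻¹ *ᵥ (x - μ))) / 2)

lemma gdensR_nonneg (μ : ι → ℝ) (S : Matrix ι ι ℝ) (x : ι → ℝ) : 0 ≤ gdensR ι μ S x := by
  unfold gdensR
  positivity

/-- general multivariate Gaussian measure -/
noncomputable def mvg (ι : Type*) [Fintype ι] [DecidableEq ι] (μ : ι → ℝ) (S : Matrix ι ι ℝ) :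
    Measure (ι → ℝ) :=
  volume.withDensity fun x => ENNReal.ofReal (gdensR ι μ S x)

/-- the standard Gaussian -/
noncomputable def stdg (ι : Type*) [Fintype ι] [DecidableEq ι] : Measure (ι → ℝ) := mvg ι 0 1

instance (μ : ι → ℝ) (S : Matrix ι ι ℝ) : SigmaFinite (mvg ι μ S) := by
  unfold mvg; infer_instance

instance : SigmaFinite (stdg ι) := by unfold stdg; infer_instance

lemma mvg_fin {d : ℕ} (μ : Fin d → ℝ) (S : Matrix (Fin d) (Fin d) ℝ) :
    multivariateGaussian μ S = mvg (Fin d) μ S := by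
  unfold _root_.multivariateGaussian mvg gdensR
  simp [Fintype.card_fin]

lemma measurable_gdensR (μ : ι → ℝ) (S : Matrix ι ι ℝ) : Measurable (gdensR ι μ S) := by
  unfold gdensR
  refine Measurable.const_mul ?_ _
  refine Real.measurable_exp.comp (Measurable.div_const (Measurable.neg ?_) 2)
  simp only [dotProduct, Matrix.mulVec, Pi.sub_apply]
  refine Finset.measurable_sum _ fun i _ => Measurable.mul ?_ ?_
  · exact (measurable_pi_apply i).sub measurable_const
  · exact Finset.measurable_sum _ fun j _ =>
      ((measurable_pi_apply j).sub measurable_const).const_mul _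

lemma measurable_mulVec {κ : Type*} (M : Matrix κ ι ℝ) :
    Measurable fun x : ι → ℝ => M *ᵥ x := by
  refine measurable_pi_lambda _ fun k => ?_
  simp only [Matrix.mulVec, dotProduct]
  exact Finset.measurable_sum _ fun i _ => (measurable_pi_apply (X := fun _ : ι => ℝ) i).const_mul (M k i)

lemma map_withDensity {α β : Type*} [MeasurableSpace α] [MeasurableSpace β]
    (e : α ≃ᵐ β) (μ : Measure α) (g : α → ℝ≥0∞) (hg : Measurable g) :
    Measure.map e (μ.withDensity g) = (Measure.map e μ).withDensity fun y => g (e.symm y) := by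
  ext s hs
  rw [Measure.map_apply e.measurable hs, withDensity_apply _ (e.measurable hs),
    withDensity_apply _ hs, setLIntegral_map (f := fun y => g (e.symm y)) hs (hg.comp e.symm.measurable) e.measurable]
  simp only [e.symm_apply_apply]

lemma withDensity_prod {α β : Type*} [MeasurableSpace α] [MeasurableSpace β]
    (μ : Measure α) (ν : Measure β) [SigmaFinite μ] [SigmaFinite ν]
    (f : α → ℝ≥0∞) (g : β → ℝ≥0∞) (hf : Measurable f) (hg : Measurable g)
    [SigmaFinite (μ.withDensity f)] [SigmaFinite (ν.withDensity g)] :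
    (μ.withDensity f).prod (ν.withDensity g) =
      (μ.prod ν).withDensity fun p => f p.1 * g p.2 := by
  refine Measure.prod_eq fun s t hs ht => ?_
  rw [withDensity_apply _ (hs.prod ht), ← Measure.prod_restrict,
    lintegral_prod_mul hf.aemeasurable hg.aemeasurable,
    withDensity_apply _ hs, withDensity_apply _ ht]

/-- `mulVec` by an invertible matrix as a measurable equivalence -/
noncomputable def mvEquiv (B : Matrix ι ι ℝ) (hB : B.det ≠ 0) : (ι → ℝ) ≃ᵐ (ι → ℝ) where
  toFun := (B *ᵥ ·)
  invFun := (B⁻¹ *ᵥ ·)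
  left_inv x := by
    show B⁻¹ *ᵥ (B *ᵥ x) = x
    rw [Matrix.mulVec_mulVec, Matrix.nonsing_inv_mul _ (isUnit_iff_ne_zero.2 hB),
      Matrix.one_mulVec]
  right_inv x := by
    show B *ᵥ (B⁻¹ *ᵥ x) = x
    rw [Matrix.mulVec_mulVec, Matrix.mul_nonsing_inv _ (isUnit_iff_ne_zero.2 hB),
      Matrix.one_mulVec]
  measurable_toFun := measurable_mulVec B
  measurable_invFun := measurable_mulVec B⁻¹

/-- translation as a measurable equivalence -/
def addEquiv' (c : ι → ℝ) : (ι → ℝ) ≃ᵐ (ι → ℝ) where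
  toFun := (c + ·)
  invFun := (-c + ·)
  left_inv x := by simp
  right_inv x := by simp
  measurable_toFun := measurable_pi_lambda _ fun i => (measurable_pi_apply (X := fun _ : ι => ℝ) i).const_add (c i)
  measurable_invFun := measurable_const_add (-c)


lemma map_affine_std (B : Matrix ι ι ℝ) (hB : B.det ≠ 0) (c : ι → ℝ) :
    Measure.map (fun x => c + B *ᵥ x) (stdg ι) = mvg ι c (B * Bᵀ) := by
  -- step 1 : push forward along `B *ᵥ ·`
  have h1 : Measure.map (fun x : ι → ℝ => B *ᵥ x) (stdg ι)
      = volume.withDensity fun x => ENNReal.ofReal (|B.det|⁻¹ * gdensR ι 0 1 (B⁻¹ *ᵥ x)) := by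
    have hvol : Measure.map (⇑(mvEquiv B hB)) volume = ENNReal.ofReal |B.det⁻¹| • volume := by
      have h := Real.map_matrix_volume_pi_eq_smul_volume_pi (M := B) hB
      have hco : ⇑(Matrix.toLin' B) = fun x : ι → ℝ => B *ᵥ x :=
        funext fun x => Matrix.toLin'_apply B x
      rw [hco] at h
      exact h
    rw [show (fun x : ι → ℝ => B *ᵥ x) = ⇑(mvEquiv B hB) from rfl]
    unfold stdg mvg
    rw [map_withDensity (mvEquiv B hB) volume _ ((measurable_gdensR _ _).ennreal_ofReal), hvol,
      withDensity_smul_measure,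
      ← withDensity_smul (f := fun y => ENNReal.ofReal (gdensR ι 0 1 ((mvEquiv B hB).symm y))) _
        (((measurable_gdensR _ _).comp
        (mvEquiv B hB).symm.measurable).ennreal_ofReal)]
    congr 1
    funext x
    simp only [Pi.smul_apply, smul_eq_mul]
    rw [← ENNReal.ofReal_mul (by positivity)]
    rw [abs_inv]
    rfl
  -- step 2 : translation
  have h2 : Measure.map (fun x : ι → ℝ => c + x)
        (volume.withDensity fun x => ENNReal.ofReal (|B.det|⁻¹ * gdensR ι 0 1 (B⁻¹ *ᵥ x)))
      = volume.withDensity fun x =>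
          ENNReal.ofReal (|B.det|⁻¹ * gdensR ι 0 1 (B⁻¹ *ᵥ (x - c))) := by
    rw [show (fun x : ι → ℝ => c + x) = ⇑(addEquiv' c) from rfl,
      map_withDensity (addEquiv' c) volume _ (by
        exact (((measurable_gdensR _ _).comp
          ((measurable_mulVec B⁻¹).comp measurable_id)).const_mul _).ennreal_ofReal)]
    have hma : Measure.map (⇑(addEquiv' c)) (volume : Measure (ι → ℝ)) = volume := by
      have h' := (measurePreserving_add_left (volume : Measure (ι → ℝ)) c).map_eq
      exact h'
    rw [hma]
    congr 1
    funext x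
    have : (addEquiv' c).symm x = x - c := neg_add_eq_sub c x
    rw [this]
  have hadd : Measurable (fun x : ι → ℝ => c + x) := measurable_id.const_add c
  have hcomp : Measure.map (fun x : ι → ℝ => c + B *ᵥ x) (stdg ι)
      = Measure.map (fun x : ι → ℝ => c + x) (Measure.map (fun x => B *ᵥ x) (stdg ι)) :=
    (Measure.map_map hadd (measurable_mulVec B)).symm
  rw [hcomp, h1, h2]
  unfold mvg
  congr 1
  funext x
  congr 1
  have hq : (x - c) ⬝ᵥ ((B * Bᵀ)⁻¹ *ᵥ (x - c))
      = (B⁻¹ *ᵥ (x - c)) ⬝ᵥ (B⁻¹ *ᵥ (x - c)) := by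
    rw [Matrix.mul_inv_rev, ← Matrix.transpose_nonsing_inv, ← Matrix.mulVec_mulVec,
      Matrix.dotProduct_mulVec, Matrix.vecMul_transpose]
  have hconst : |B.det|⁻¹ * (Real.sqrt ((2 * Real.pi) ^ (Fintype.card ι)
        * (1 : Matrix ι ι ℝ).det))⁻¹
      = (Real.sqrt ((2 * Real.pi) ^ (Fintype.card ι) * (B * Bᵀ).det))⁻¹ := by
    rw [Matrix.det_one, mul_one, Matrix.det_mul, Matrix.det_transpose, ← sq,
      Real.sqrt_mul (by positivity), Real.sqrt_sq_eq_abs, mul_inv, mul_comm]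
  unfold gdensR
  rw [sub_zero, inv_one, Matrix.one_mulVec, hq, ← mul_assoc, hconst]

lemma map_smul_std (s : ℝ) (hs : s ≠ 0) :
    Measure.map (fun x : ι → ℝ => s • x) (stdg ι) = mvg ι 0 (s ^ 2 • 1) := by
  have hdet : (s • (1 : Matrix ι ι ℝ)).det ≠ 0 := by
    rw [Matrix.det_smul, Matrix.det_one, mul_one]; exact pow_ne_zero _ hs
  have h := map_affine_std (s • (1 : Matrix ι ι ℝ)) hdet 0
  simp only [zero_add] at h
  have h1 : (fun x : ι → ℝ => (s • (1 : Matrix ι ι ℝ)) *ᵥ x) = fun x => s • x := by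
    funext x; rw [Matrix.smul_mulVec, Matrix.one_mulVec]
  have h2 : (s • (1 : Matrix ι ι ℝ)) * (s • (1 : Matrix ι ι ℝ))ᵀ = s ^ 2 • 1 := by
    rw [Matrix.transpose_smul, Matrix.transpose_one]
    rw [Matrix.smul_mul, Matrix.mul_smul, Matrix.one_mul, smul_smul, sq]
  rw [← h1, h, h2]

lemma map_orth_std {O : Matrix ι ι ℝ} (hO : O * Oᵀ = 1) :
    Measure.map (fun x : ι → ℝ => O *ᵥ x) (stdg ι) = stdg ι := by
  have hd : O.det * O.det = 1 := by
    have h := congrArg Matrix.det hO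
    rwa [Matrix.det_mul, Matrix.det_transpose, Matrix.det_one] at h
  have hdet : O.det ≠ 0 := left_ne_zero_of_mul_eq_one hd
  have h := map_affine_std O hdet 0
  simp only [zero_add] at h
  rw [h, hO]
  rfl


lemma std_sum_eq :
    Measure.map (⇑(MeasurableEquiv.sumPiEquivProdPi (fun _ : κ ⊕ ρ => ℝ)).symm)
      ((stdg κ).prod (stdg ρ)) = stdg (κ ⊕ ρ) := by
  unfold stdg mvg
  rw [withDensity_prod volume volume _ _ (measurable_gdensR _ _).ennreal_ofReal
    (measurable_gdensR _ _).ennreal_ofReal, ← Measure.volume_eq_prod,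
    map_withDensity (MeasurableEquiv.sumPiEquivProdPi (fun _ : κ ⊕ ρ => ℝ)).symm volume _
      (by
        refine Measurable.mul (M := ℝ≥0∞) ?_ ?_
        · exact ((measurable_gdensR _ _).comp measurable_fst).ennreal_ofReal
        · exact ((measurable_gdensR _ _).comp measurable_snd).ennreal_ofReal),
    (volume_measurePreserving_sumPiEquivProdPi_symm (fun _ : κ ⊕ ρ => ℝ)).map_eq]
  congr 1
  funext x
  simp only [MeasurableEquiv.symm_symm]
  have hfst : ((MeasurableEquiv.sumPiEquivProdPi (fun _ : κ ⊕ ρ => ℝ)) x).1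
      = fun k => x (Sum.inl k) := rfl
  have hsnd : ((MeasurableEquiv.sumPiEquivProdPi (fun _ : κ ⊕ ρ => ℝ)) x).2
      = fun r => x (Sum.inr r) := rfl
  rw [hfst, hsnd, ← ENNReal.ofReal_mul (gdensR_nonneg _ _ _)]
  congr 1
  unfold gdensR
  simp only [sub_zero, inv_one, Matrix.one_mulVec, Matrix.det_one, mul_one]
  rw [mul_mul_mul_comm]
  congr 1
  · rw [← mul_inv, ← Real.sqrt_mul (by positivity), ← pow_add, Fintype.card_sum]
  · rw [← Real.exp_add, ← add_div, ← neg_add]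
    congr 2
    simp [dotProduct, Fintype.sum_sum_type]

lemma map_projl [IsProbabilityMeasure (stdg ρ)] :
    Measure.map (fun x : (κ ⊕ ρ) → ℝ => fun k : κ => x (Sum.inl k)) (stdg (κ ⊕ ρ))
      = stdg κ := by
  rw [← std_sum_eq (κ := κ) (ρ := ρ),
    Measure.map_map (measurable_pi_lambda _ fun k => measurable_pi_apply (Sum.inl k))
      (MeasurableEquiv.measurable _)]
  have hcomp : ((fun x : (κ ⊕ ρ) → ℝ => fun k : κ => x (Sum.inl k))
      ∘ ⇑(MeasurableEquiv.sumPiEquivProdPi (fun _ : κ ⊕ ρ => ℝ)).symm)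
      = (Prod.fst : ((κ → ℝ) × (ρ → ℝ)) → (κ → ℝ)) := by
    funext p; rfl
  rw [hcomp, Measure.map_fst_prod]
  simp

set_option maxHeartbeats 1000000 in
lemma map_coIsometry_std (L : Matrix κ (κ ⊕ ρ) ℝ) (hL : L * Lᵀ = 1)
    [IsProbabilityMeasure (stdg ρ)] :
    Measure.map (fun x => L *ᵥ x) (stdg (κ ⊕ ρ)) = stdg κ := by
  classical
  let v : (κ ⊕ ρ) → EuclideanSpace ℝ (κ ⊕ ρ) :=
    Sum.elim (fun k => (WithLp.equiv 2 ((κ ⊕ ρ) → ℝ)).symm (L k)) (fun _ => 0)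
  have hv : Orthonormal ℝ ((Set.range (Sum.inl : κ → κ ⊕ ρ)).restrict v) := by
    rw [orthonormal_iff_ite]
    rintro ⟨i, k, rfl⟩ ⟨j, k', rfl⟩
    have hI : (inner ℝ (v (Sum.inl k)) (v (Sum.inl k')) : ℝ) = ∑ t, L k t * L k' t := by
      simp [v, PiLp.inner_apply, RCLike.inner_apply, mul_comm]
    have hM : ∑ t, L k t * L k' t = (1 : Matrix κ κ ℝ) k k' := by
      rw [← hL]; simp [Matrix.mul_apply]
    change inner ℝ (v (Sum.inl k)) (v (Sum.inl k')) = _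
    rw [hI, hM, Matrix.one_apply]
    by_cases h1 : k = k'
    · subst h1; rw [if_pos rfl, if_pos rfl]
    · rw [if_neg h1, if_neg]
      exact fun h2 => h1 (Sum.inl_injective (congrArg Subtype.val h2))
  obtain ⟨b, hb⟩ := hv.exists_orthonormalBasis_extension_of_card_eq finrank_euclideanSpace
  let O : Matrix (κ ⊕ ρ) (κ ⊕ ρ) ℝ := Matrix.of fun i j => b i j
  have hOO : O * Oᵀ = 1 := by
    ext i j
    have h := orthonormal_iff_ite.mp b.orthonormal i j
    simp only [PiLp.inner_apply, RCLike.inner_apply, starRingEnd_apply, star_trivial] at h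
    have hOij : (O * Oᵀ) i j = ∑ t, b i t * b j t := by
      simp [O, Matrix.mul_apply]
    rw [hOij, Matrix.one_apply, ← h]
    exact Finset.sum_congr rfl fun _ _ => mul_comm _ _
  have hdet : O.det ≠ 0 := by
    have hd := congrArg Matrix.det hOO
    rw [Matrix.det_mul, Matrix.det_transpose, Matrix.det_one] at hd
    exact left_ne_zero_of_mul_eq_one hd
  have hfac : (fun x : (κ ⊕ ρ) → ℝ => L *ᵥ x)
      = (fun x : (κ ⊕ ρ) → ℝ => fun k : κ => x (Sum.inl k)) ∘ (fun x => O *ᵥ x) := by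
    funext x
    funext k
    show (L *ᵥ x) k = (O *ᵥ x) (Sum.inl k)
    simp only [Matrix.mulVec, dotProduct]
    refine Finset.sum_congr rfl fun t _ => ?_
    have hO : O (Sum.inl k) t = L k t := by
      have hbk := hb (Sum.inl k) ⟨k, rfl⟩
      simp only [O, Matrix.of_apply, hbk]
      rfl
    rw [hO]
  rw [hfac, ← Measure.map_map (measurable_pi_lambda _ fun k => measurable_pi_apply (Sum.inl k))
    (measurable_mulVec O), map_orth_std hOO, map_projl]

end MVGaussAux

open MVGaussAux

/-- If `ε` and `η` are independent random vectors whose laws are the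
centered multivariate Gaussian measures with covariance matrices `σ² I_n` on `ℝⁿ` and
`α² I_D` on `ℝᴰ` respectively, then the law of the perturbed MAP estimator
`w* := (1/σ²) A⁻¹ Φ (y + ε) + (1/α²) A⁻¹ η` is the multivariate Gaussian measure on
`ℝᴰ` with mean `w̄` and covariance matrix `A⁻¹`: `w*` is distributed exactly according
to the Bayesian posterior of the linear model. -/
theorem law_perturbed_map_eq_posterior
    {D n : ℕ} (σ α : ℝ) (hσ : 0 < σ) (hα : 0 < α)
    (Φ : Matrix (Fin D) (Fin n) ℝ) (y : Fin n → ℝ)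
    (A : Matrix (Fin D) (Fin D) ℝ)
    (hA : A = (1 / σ ^ 2) • (Φ * Φᵀ) + (1 / α ^ 2) • (1 : Matrix (Fin D) (Fin D) ℝ))
    (wbar : Fin D → ℝ) (hwbar : wbar = (1 / σ ^ 2) • (A⁻¹ *ᵥ (Φ *ᵥ y)))
    {Ω : Type*} [MeasurableSpace Ω] (P : Measure Ω) [IsProbabilityMeasure P]
    (ε : Ω → Fin n → ℝ) (η : Ω → Fin D → ℝ)
    (hεmeas : Measurable ε) (hηmeas : Measurable η)
    (hεlaw : Measure.map ε P = _root_.multivariateGaussian 0 (σ ^ 2 • (1 : Matrix (Fin n) (Fin n) ℝ)))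
    (hηlaw : Measure.map η P = _root_.multivariateGaussian 0 (α ^ 2 • (1 : Matrix (Fin D) (Fin D) ℝ)))
    (hindep : IndepFun ε η P)
    (wstar : Ω → Fin D → ℝ)
    (hwstar : ∀ ω, wstar ω =
      (1 / σ ^ 2) • (A⁻¹ *ᵥ (Φ *ᵥ (y + ε ω))) + (1 / α ^ 2) • (A⁻¹ *ᵥ η ω)) :
    Measure.map wstar P = multivariateGaussian wbar A⁻¹ := by
  classical
  have hσ0 : σ ≠ 0 := ne_of_gt hσ
  have hα0 : α ≠ 0 := ne_of_gt hα
  -- ## Linear algebra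
  have hAT : Aᵀ = A := by
    rw [hA, Matrix.transpose_add, Matrix.transpose_smul, Matrix.transpose_smul,
      Matrix.transpose_mul, Matrix.transpose_transpose, Matrix.transpose_one]
  have hApd : A.PosDef := by
    refine Matrix.PosDef.of_dotProduct_mulVec_pos ?_ ?_
    · show Aᴴ = A
      have h : Aᴴ = Aᵀ := by
        ext i j; simp [Matrix.conjTranspose_apply]
      rw [h, hAT]
    · intro x hx
      have hxx : 0 < x ⬝ᵥ x := by
        rcases lt_or_eq_of_le (Finset.sum_nonneg fun i _ => mul_self_nonneg (x i)) with h | h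
        · exact h
        · exact absurd (dotProduct_self_eq_zero.mp h.symm) hx
      have hquad : x ⬝ᵥ (A *ᵥ x)
          = (1/σ^2) * ((Φᵀ *ᵥ x) ⬝ᵥ (Φᵀ *ᵥ x)) + (1/α^2) * (x ⬝ᵥ x) := by
        rw [hA, Matrix.add_mulVec, dotProduct_add, Matrix.smul_mulVec,
          Matrix.smul_mulVec, Matrix.one_mulVec, dotProduct_smul,
          dotProduct_smul, smul_eq_mul, smul_eq_mul]
        congr 2
        rw [← Matrix.mulVec_mulVec, Matrix.dotProduct_mulVec, ← Matrix.mulVec_transpose]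
      have hsx : star x = x := by funext i; simp
      show 0 < (star x) ⬝ᵥ (A *ᵥ x)
      rw [hsx, hquad]
      have h1 : 0 ≤ (1/σ^2) * ((Φᵀ *ᵥ x) ⬝ᵥ (Φᵀ *ᵥ x)) := by
        refine mul_nonneg (by positivity) (Finset.sum_nonneg fun i _ => mul_self_nonneg _)
      have h2 : 0 < (1/α^2) * (x ⬝ᵥ x) := by
        refine mul_pos (by positivity) hxx
      linarith
  have hAdet : A.det ≠ 0 := ne_of_gt hApd.det_pos
  have hAU : IsUnit A.det := isUnit_iff_ne_zero.2 hAdet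
  have hAiT : A⁻¹ᵀ = A⁻¹ := by rw [Matrix.transpose_nonsing_inv, hAT]
  have hAipsd : A⁻¹.PosSemidef := hApd.inv.posSemidef
  set B : Matrix (Fin D) (Fin D) ℝ := (open scoped MatrixOrder in CFC.sqrt A⁻¹) with hBdef
  have hBB : B * B = A⁻¹ := by
    open scoped MatrixOrder in exact CFC.sqrt_mul_sqrt_self A⁻¹ hAipsd.nonneg
  have hBH : B.IsHermitian := by
    open scoped MatrixOrder in exact (CFC.sqrt_nonneg A⁻¹).posSemidef.isHermitian
  have hBT : Bᵀ = B := by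
    ext i j
    have h := congrFun (congrFun hBH j) i
    simp only [Matrix.conjTranspose_apply, star_trivial] at h
    simpa [Matrix.transpose_apply] using h.symm
  have hBdet : B.det ≠ 0 := by
    have h1 : B.det * B.det = A⁻¹.det := by rw [← Matrix.det_mul, hBB]
    have h2 : A⁻¹.det ≠ 0 := by
      rw [Matrix.det_nonsing_inv]
      simpa [Ring.inverse_eq_inv'] using inv_ne_zero hAdet
    intro h0
    rw [h0, zero_mul] at h1
    exact h2 h1.symm
  have hBU : IsUnit B.det := isUnit_iff_ne_zero.2 hBdet
  have hBiT : B⁻¹ᵀ = B⁻¹ := by rw [Matrix.transpose_nonsing_inv, hBT]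
  set M : Matrix (Fin D) (Fin n) ℝ := (1/σ^2) • (A⁻¹ * Φ) with hM
  set N : Matrix (Fin D) (Fin D) ℝ := (1/α^2) • A⁻¹ with hN
  have key1 : σ^2 • (M * Mᵀ) + α^2 • (N * Nᵀ) = A⁻¹ := by
    have hMMt : M * Mᵀ = (1/σ^2 * (1/σ^2)) • (A⁻¹ * ((Φ * Φᵀ) * A⁻¹)) := by
      rw [hM, Matrix.transpose_smul, Matrix.transpose_mul, hAiT]
      simp only [Matrix.smul_mul, Matrix.mul_smul, smul_smul, Matrix.mul_assoc]
    have hNNt : N * Nᵀ = (1/α^2 * (1/α^2)) • (A⁻¹ * ((1 : Matrix (Fin D) (Fin D) ℝ) * A⁻¹)) := by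
      rw [hN, Matrix.transpose_smul, hAiT]
      simp only [Matrix.smul_mul, Matrix.mul_smul, smul_smul, Matrix.one_mul]
    rw [hMMt, hNNt, smul_smul, smul_smul]
    have e1 : σ^2 * (1/σ^2 * (1/σ^2)) = 1/σ^2 := by field_simp
    have e2 : α^2 * (1/α^2 * (1/α^2)) = 1/α^2 := by field_simp
    rw [e1, e2]
    have hfac : (1/σ^2) • (A⁻¹ * ((Φ * Φᵀ) * A⁻¹))
          + (1/α^2) • (A⁻¹ * ((1 : Matrix (Fin D) (Fin D) ℝ) * A⁻¹))
        = A⁻¹ * (((1/σ^2) • (Φ * Φᵀ) + (1/α^2) • (1 : Matrix (Fin D) (Fin D) ℝ)) * A⁻¹) := by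
      rw [Matrix.add_mul, Matrix.mul_add]
      simp only [Matrix.mul_smul, Matrix.smul_mul]
    rw [hfac, ← hA, ← Matrix.mul_assoc, Matrix.nonsing_inv_mul _ hAU, Matrix.one_mul]
  set U1 : Matrix (Fin D) (Fin n) ℝ := B⁻¹ * (σ • M) with hU1
  set U2 : Matrix (Fin D) (Fin D) ℝ := B⁻¹ * (α • N) with hU2
  have key2 : Matrix.fromCols U2 U1 * (Matrix.fromCols U2 U1)ᵀ = 1 := by
    rw [Matrix.transpose_fromCols, Matrix.fromCols_mul_fromRows]
    have hU1t : U1 * U1ᵀ = B⁻¹ * (σ^2 • (M * Mᵀ) * B⁻¹) := by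
      rw [hU1, Matrix.transpose_mul, Matrix.transpose_smul, hBiT, sq]
      simp only [Matrix.smul_mul, Matrix.mul_smul, smul_smul, Matrix.mul_assoc]
    have hU2t : U2 * U2ᵀ = B⁻¹ * (α^2 • (N * Nᵀ) * B⁻¹) := by
      rw [hU2, Matrix.transpose_mul, Matrix.transpose_smul, hBiT, sq]
      simp only [Matrix.smul_mul, Matrix.mul_smul, smul_smul, Matrix.mul_assoc]
    rw [hU1t, hU2t, ← Matrix.mul_add, ← Matrix.add_mul,
      add_comm (α^2 • (N * Nᵀ)) (σ^2 • (M * Mᵀ)), key1, ← hBB]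
    calc B⁻¹ * (B * B * B⁻¹) = B⁻¹ * B * (B * B⁻¹) := by
          rw [Matrix.mul_assoc, Matrix.mul_assoc]
      _ = 1 := by rw [Matrix.nonsing_inv_mul _ hBU, Matrix.mul_nonsing_inv _ hBU, Matrix.one_mul]
  -- ## Measure theory
  have hwstar2 : wstar = (fun p : (Fin n → ℝ) × (Fin D → ℝ) => wbar + (M *ᵥ p.1 + N *ᵥ p.2))
      ∘ (fun ω => (ε ω, η ω)) := by
    funext ω
    show wstar ω = wbar + (M *ᵥ ε ω + N *ᵥ η ω)
    rw [hwstar ω]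
    have h1 : (1/σ^2) • (A⁻¹ *ᵥ (Φ *ᵥ (y + ε ω)))
        = (1/σ^2) • (A⁻¹ *ᵥ (Φ *ᵥ y)) + M *ᵥ ε ω := by
      rw [Matrix.mulVec_add, Matrix.mulVec_add, smul_add, hM, Matrix.smul_mulVec,
        Matrix.mulVec_mulVec, Matrix.mulVec_mulVec]
    have h2 : (1/α^2) • (A⁻¹ *ᵥ η ω) = N *ᵥ η ω := by
      rw [hN, Matrix.smul_mulVec]
    rw [h1, h2, ← hwbar, add_assoc]
  have hmeasF : Measurable (fun p : (Fin n → ℝ) × (Fin D → ℝ) => wbar + (M *ᵥ p.1 + N *ᵥ p.2)) :=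
    (((measurable_mulVec M).comp measurable_fst).add
      ((measurable_mulVec N).comp measurable_snd)).const_add wbar
  rw [hwstar2, ← Measure.map_map hmeasF (hεmeas.prodMk hηmeas),
    (indepFun_iff_map_prod_eq_prod_map_map hεmeas.aemeasurable hηmeas.aemeasurable).mp hindep,
    hεlaw, hηlaw, mvg_fin, mvg_fin]
  have hmapσ : mvg (Fin n) 0 (σ^2 • 1)
      = Measure.map (fun x : Fin n → ℝ => σ • x) (stdg (Fin n)) := (map_smul_std σ hσ0).symm
  have hmapα : mvg (Fin D) 0 (α^2 • 1)
      = Measure.map (fun x : Fin D → ℝ => α • x) (stdg (Fin D)) := (map_smul_std α hα0).symm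
  have hsmσ : Measurable (fun x : Fin n → ℝ => σ • x) := measurable_id.const_smul σ
  have hsmα : Measurable (fun x : Fin D → ℝ => α • x) := measurable_id.const_smul α
  have hstdn_prob : IsProbabilityMeasure (stdg (Fin n)) := by
    have hp : IsProbabilityMeasure (mvg (Fin n) 0 (σ^2 • 1)) := by
      rw [← mvg_fin, ← hεlaw]
      exact Measure.isProbabilityMeasure_map hεmeas.aemeasurable
    have hinvm : Measurable (fun x : Fin n → ℝ => σ⁻¹ • x) := measurable_id.const_smul σ⁻¹
    have hiter : stdg (Fin n)
        = Measure.map (fun x : Fin n → ℝ => σ⁻¹ • x) (mvg (Fin n) 0 (σ^2 • 1)) := by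
      rw [hmapσ, Measure.map_map hinvm hsmσ]
      have hid : ((fun x : Fin n → ℝ => σ⁻¹ • x) ∘ fun x => σ • x) = id := by
        funext x; simp [smul_smul, inv_mul_cancel₀ hσ0]
      rw [hid, Measure.map_id]
    rw [hiter]
    exact Measure.isProbabilityMeasure_map hinvm.aemeasurable
  rw [hmapσ, hmapα, Measure.map_prod_map _ _ hsmσ hsmα,
    Measure.map_map hmeasF (hsmσ.prodMap hsmα)]
  have hGeq : ((fun p : (Fin n → ℝ) × (Fin D → ℝ) => wbar + (M *ᵥ p.1 + N *ᵥ p.2))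
        ∘ Prod.map (fun x : Fin n → ℝ => σ • x) (fun x : Fin D → ℝ => α • x))
      = (fun z : Fin D → ℝ => wbar + B *ᵥ z)
        ∘ (fun p : (Fin n → ℝ) × (Fin D → ℝ) => U1 *ᵥ p.1 + U2 *ᵥ p.2) := by
    funext p
    show wbar + (M *ᵥ (σ • p.1) + N *ᵥ (α • p.2)) = wbar + B *ᵥ (U1 *ᵥ p.1 + U2 *ᵥ p.2)
    congr 1
    rw [Matrix.mulVec_add]
    congr 1
    · rw [Matrix.mulVec_mulVec, hU1, Matrix.mul_nonsing_inv_cancel_left _ _ hBU,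
        Matrix.smul_mulVec, Matrix.mulVec_smul, hM]
      simp [Matrix.smul_mulVec, smul_smul, mul_comm]
    · rw [Matrix.mulVec_mulVec, hU2, Matrix.mul_nonsing_inv_cancel_left _ _ hBU,
        Matrix.smul_mulVec, Matrix.mulVec_smul, hN]
      simp [Matrix.smul_mulVec, smul_smul, mul_comm]
  have hUmeas : Measurable (fun p : (Fin n → ℝ) × (Fin D → ℝ) => U1 *ᵥ p.1 + U2 *ᵥ p.2) :=
    ((measurable_mulVec U1).comp measurable_fst).add ((measurable_mulVec U2).comp measurable_snd)
  have hBmeas : Measurable (fun z : Fin D → ℝ => wbar + B *ᵥ z) :=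
    (measurable_mulVec B).const_add wbar
  rw [hGeq, ← Measure.map_map hBmeas hUmeas]
  have hinner : Measure.map (fun p : (Fin n → ℝ) × (Fin D → ℝ) => U1 *ᵥ p.1 + U2 *ᵥ p.2)
      ((stdg (Fin n)).prod (stdg (Fin D))) = stdg (Fin D) := by
    have hswapfun : (fun p : (Fin n → ℝ) × (Fin D → ℝ) => U1 *ᵥ p.1 + U2 *ᵥ p.2)
        = (fun q : (Fin D → ℝ) × (Fin n → ℝ) => U2 *ᵥ q.1 + U1 *ᵥ q.2) ∘ Prod.swap := by
      funext p
      simp only [Function.comp_apply, Prod.swap_prod_mk, Prod.fst_swap, Prod.snd_swap]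
      exact add_comm _ _
    have hqmeas : Measurable (fun q : (Fin D → ℝ) × (Fin n → ℝ) => U2 *ᵥ q.1 + U1 *ᵥ q.2) :=
      ((measurable_mulVec U2).comp measurable_fst).add
        ((measurable_mulVec U1).comp measurable_snd)
    rw [hswapfun, ← Measure.map_map hqmeas measurable_swap, Measure.prod_swap]
    have hsum : (stdg (Fin D)).prod (stdg (Fin n))
        = Measure.map (⇑(MeasurableEquiv.sumPiEquivProdPi (fun _ : Fin D ⊕ Fin n => ℝ)))
            (stdg (Fin D ⊕ Fin n)) := by
      rw [← std_sum_eq (κ := Fin D) (ρ := Fin n),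
        Measure.map_map (MeasurableEquiv.measurable _) (MeasurableEquiv.measurable _),
        MeasurableEquiv.self_comp_symm, Measure.map_id]
    rw [hsum, Measure.map_map hqmeas (MeasurableEquiv.measurable _)]
    have hLrw : ((fun q : (Fin D → ℝ) × (Fin n → ℝ) => U2 *ᵥ q.1 + U1 *ᵥ q.2)
          ∘ ⇑(MeasurableEquiv.sumPiEquivProdPi (fun _ : Fin D ⊕ Fin n => ℝ)))
        = fun x => (Matrix.fromCols U2 U1) *ᵥ x := by
      funext x
      show U2 *ᵥ (fun k => x (Sum.inl k)) + U1 *ᵥ (fun j => x (Sum.inr j))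
          = (Matrix.fromCols U2 U1) *ᵥ x
      calc U2 *ᵥ (fun k => x (Sum.inl k)) + U1 *ᵥ (fun j => x (Sum.inr j))
          = (Matrix.fromCols U2 U1) *ᵥ
              ((fun k => x (Sum.inl k)) ⊕ᵥ (fun j => x (Sum.inr j))) :=
            (Matrix.fromCols_mulVec_sumElim _ _ _ _).symm
        _ = (Matrix.fromCols U2 U1) *ᵥ x := by
            have hel : ((fun k => x (Sum.inl k)) ⊕ᵥ (fun j => x (Sum.inr j))) = x := by
              funext i; cases i <;> rfl
            rw [hel]
    rw [hLrw, map_coIsometry_std _ key2]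
  rw [hinner, map_affine_std B hBdet wbar, hBT, hBB]
  exact (mvg_fin _ _).symm
end

section
/- In the Gaussian regression model, let ε₁,…,εₙ and η₁,…,ηₘ be integrable real random variables with E[ε_i] = 0 for all i and E[η_j] = 0 for all j, and let L̃ be the (random) perturbed joint log-likelihood built from ε and η. Then for every fixed θ ∈ ℝᵐ, the expectation of the perturbed gradient equals the unperturbed gradient: E[∇L̃(θ)] = ∇L(θ). -/
open MeasureTheory
open scoped BigOperators
open InnerProductSpace

lemma gauss_grad {n m : ℕ} (σ α : ℝ) (hσ : 0 < σ) (hα : 0 < α)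
    (f : Fin n → EuclideanSpace ℝ (Fin m) → ℝ)
    (hf : ∀ i, ContDiff ℝ 2 (f i))
    (z : Fin n → ℝ) (v : EuclideanSpace ℝ (Fin m)) (θ : EuclideanSpace ℝ (Fin m)) :
    HasGradientAt (fun θ => -(∑ i, (f i θ - z i) ^ 2 / (2 * σ ^ 2))
        - ∑ j, (θ j - v j) ^ 2 / (2 * α ^ 2))
      ((-(σ ^ 2)⁻¹) • ∑ i, (f i θ - z i) • gradient (f i) θ
        + (-(α ^ 2)⁻¹) • (θ - v)) θ := by
  have hfd : ∀ i, HasFDerivAt (f i) (fderiv ℝ (f i) θ) θ := fun i =>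
    ((hf i).differentiable (by norm_num)).differentiableAt.hasFDerivAt
  set D : EuclideanSpace ℝ (Fin m) →L[ℝ] ℝ :=
    (-(∑ i, (2 * σ ^ 2)⁻¹ • ((f i θ - z i) • fderiv ℝ (f i) θ + (f i θ - z i) • fderiv ℝ (f i) θ))
      - ∑ j, (2 * α ^ 2)⁻¹ • ((θ j - v j) • (EuclideanSpace.proj j
          : EuclideanSpace ℝ (Fin m) →L[ℝ] ℝ)
        + (θ j - v j) • (EuclideanSpace.proj j : EuclideanSpace ℝ (Fin m) →L[ℝ] ℝ))) with hDdef
  have hD : HasFDerivAt (fun θ => -(∑ i, (f i θ - z i) ^ 2 / (2 * σ ^ 2))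
        - ∑ j, (θ j - v j) ^ 2 / (2 * α ^ 2)) D θ := by
    apply HasFDerivAt.sub
    · apply HasFDerivAt.neg
      apply HasFDerivAt.fun_sum
      intro i _
      have h1 := (((hfd i).sub_const (z i)).mul ((hfd i).sub_const (z i))).mul_const (2 * σ ^ 2)⁻¹
      simpa [div_eq_mul_inv, smul_smul, smul_add, mul_comm, sq] using h1
    · apply HasFDerivAt.fun_sum
      intro j _
      have hp : HasFDerivAt (fun θ : EuclideanSpace ℝ (Fin m) => θ j)
          (EuclideanSpace.proj j : EuclideanSpace ℝ (Fin m) →L[ℝ] ℝ) θ :=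
        (EuclideanSpace.proj j : EuclideanSpace ℝ (Fin m) →L[ℝ] ℝ).hasFDerivAt
      have h1 := ((hp.sub_const (v j)).mul (hp.sub_const (v j))).mul_const (2 * α ^ 2)⁻¹
      simpa [div_eq_mul_inv, smul_smul, smul_add, mul_comm, sq] using h1
  have hEq : (toDual ℝ (EuclideanSpace ℝ (Fin m)))
      ((-(σ ^ 2)⁻¹) • ∑ i, (f i θ - z i) • gradient (f i) θ
        + (-(α ^ 2)⁻¹) • (θ - v)) = D := by
    ext x
    have hg : ∀ i, (inner ℝ (gradient (f i) θ) x : ℝ) = fderiv ℝ (f i) θ x := fun i => by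
      simpa [gradient] using (toDual_symm_apply (𝕜 := ℝ) (E := EuclideanSpace ℝ (Fin m))
        (y := fderiv ℝ (f i) θ) (x := x))
    simp only [toDual_apply_apply, ContinuousLinearMap.sub_apply, ContinuousLinearMap.neg_apply,
      ContinuousLinearMap.sum_apply, ContinuousLinearMap.smul_apply,
      ContinuousLinearMap.add_apply, inner_add_left, real_inner_smul_left, sum_inner,
      inner_sub_left, smul_eq_mul, hg, hDdef]
    have hθv : (inner ℝ θ x : ℝ) = ∑ j, θ j * x j := by
      simp [PiLp.inner_apply, RCLike.inner_apply, conj_trivial, mul_comm]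
    have hvx : (inner ℝ v x : ℝ) = ∑ j, v j * x j := by
      simp [PiLp.inner_apply, RCLike.inner_apply, conj_trivial, mul_comm]
    rw [hθv, hvx, ← Finset.sum_sub_distrib, Finset.mul_sum, Finset.mul_sum,
      sub_eq_add_neg, ← Finset.sum_neg_distrib]
    congr 1
    · apply Finset.sum_congr rfl
      intro i _
      field_simp
      ring
    · rw [← Finset.sum_neg_distrib]
      apply Finset.sum_congr rfl
      intro j _
      simp only [PiLp.proj_apply]
      field_simp
      ring
  rw [hasGradientAt_iff_hasFDerivAt, hEq]
  exact hD


/-- In the Gaussian regression model, let `ε₁,…,εₙ` and `η₁,…,ηₘ` be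
integrable real random variables with zero mean, and let `L̃` be the (random) perturbed
joint log-likelihood built from `ε` and `η`.  Then for every fixed `θ ∈ ℝᵐ`, the
expectation of the perturbed gradient equals the unperturbed gradient:
`E[∇L̃ θ] = ∇L θ`. -/
theorem expectation_perturbed_gradient
    {n m : ℕ} (hn : 1 ≤ n) (hm : 1 ≤ m)
    (σ α : ℝ) (hσ : 0 < σ) (hα : 0 < α)
    (y : Fin n → ℝ)
    (f : Fin n → EuclideanSpace ℝ (Fin m) → ℝ)
    (hf : ∀ i, ContDiff ℝ 2 (f i))
    (L : EuclideanSpace ℝ (Fin m) → ℝ)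
    (hL : ∀ θ, L θ = -(∑ i, (f i θ - y i) ^ 2 / (2 * σ ^ 2))
      - ∑ j, (θ j) ^ 2 / (2 * α ^ 2))
    {Ω : Type*} [MeasurableSpace Ω] (P : Measure Ω) [IsProbabilityMeasure P]
    (ε : Ω → Fin n → ℝ) (η : Ω → EuclideanSpace ℝ (Fin m))
    (hεint : ∀ i, Integrable (fun ω => ε ω i) P)
    (hηint : ∀ j, Integrable (fun ω => η ω j) P)
    (hεmean : ∀ i, ∫ ω, ε ω i ∂P = 0)
    (hηmean : ∀ j, ∫ ω, η ω j ∂P = 0)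
    (Lt : Ω → EuclideanSpace ℝ (Fin m) → ℝ)
    (hLt : ∀ ω θ, Lt ω θ = -(∑ i, (f i θ - y i - ε ω i) ^ 2 / (2 * σ ^ 2))
      - ∑ j, (θ j - η ω j) ^ 2 / (2 * α ^ 2)) :
    ∀ θ, ∫ ω, gradient (Lt ω) θ ∂P = gradient L θ := by
  intro θ
  set g : Fin n → EuclideanSpace ℝ (Fin m) := fun i => gradient (f i) θ with hgdef
  set u : Fin n → EuclideanSpace ℝ (Fin m) := fun i => (σ ^ 2)⁻¹ • gradient (f i) θ with hudef
  set w : Fin m → EuclideanSpace ℝ (Fin m) := fun j => (α ^ 2)⁻¹ • EuclideanSpace.single j (1 : ℝ) with hwdef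
  -- gradient of L
  have hgradL : gradient L θ
      = (-(σ ^ 2)⁻¹) • ∑ i, (f i θ - y i) • g i + (-(α ^ 2)⁻¹) • θ := by
    have h := gauss_grad σ α hσ hα f hf y 0 θ
    have hfun : L = fun θ' => -(∑ i, (f i θ' - y i) ^ 2 / (2 * σ ^ 2))
        - ∑ j, (θ' j - (0 : EuclideanSpace ℝ (Fin m)) j) ^ 2 / (2 * α ^ 2) := by
      funext θ'
      simp [hL θ']
    rw [hfun]
    simpa using h.gradient
  -- gradient of Lt ω
  have hgradLt : ∀ ω, gradient (Lt ω) θ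
      = gradient L θ + (∑ i, ε ω i • u i + ∑ j, η ω j • w j) := by
    intro ω
    have h := gauss_grad σ α hσ hα f hf (fun i => y i + ε ω i) (η ω) θ
    have hfun : Lt ω = fun θ' => -(∑ i, (f i θ' - (y i + ε ω i)) ^ 2 / (2 * σ ^ 2))
        - ∑ j, (θ' j - η ω j) ^ 2 / (2 * α ^ 2) := by
      funext θ'
      simp [hLt ω θ', sub_sub]
    rw [hfun, h.gradient, hgradL]
    have hsum : ∑ i, (f i θ - (y i + ε ω i)) • g i
        = ∑ i, (f i θ - y i) • g i - ∑ i, ε ω i • g i := by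
      rw [← Finset.sum_sub_distrib]
      refine Finset.sum_congr rfl fun i _ => ?_
      rw [← sub_smul]
      ring_nf
    have hη : ∑ j, η ω j • w j = (α ^ 2)⁻¹ • η ω := by
      ext j
      rw [show (∑ j', η ω j' • w j') j = ∑ j', (η ω j' • w j') j by rw [WithLp.ofLp_sum, Finset.sum_apply]]
      simp [hwdef, EuclideanSpace.single_apply, PiLp.smul_apply,
        smul_eq_mul, mul_ite, Finset.sum_ite_eq', mul_comm]
    have husum : ∑ i, ε ω i • u i = (σ ^ 2)⁻¹ • ∑ i, ε ω i • g i := by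
      rw [Finset.smul_sum]
      refine Finset.sum_congr rfl fun i _ => ?_
      rw [hudef, smul_comm]
    rw [hsum, hη, husum]
    set S := ∑ i, (f i θ - y i) • g i
    set T := ∑ i, ε ω i • g i
    module
  -- integrate
  have h1 : Integrable (fun ω => ∑ i, ε ω i • u i) P :=
    integrable_finset_sum _ fun i _ => (hεint i).smul_const (u i)
  have h2 : Integrable (fun ω => ∑ j, η ω j • w j) P :=
    integrable_finset_sum _ fun j _ => (hηint j).smul_const (w j)
  calc ∫ ω, gradient (Lt ω) θ ∂P
      = ∫ ω, (gradient L θ + (∑ i, ε ω i • u i + ∑ j, η ω j • w j)) ∂P := by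
        exact integral_congr_ae (Filter.Eventually.of_forall fun ω => hgradLt ω)
    _ = (∫ _ω, gradient L θ ∂P) + ∫ ω, (∑ i, ε ω i • u i + ∑ j, η ω j • w j) ∂P :=
        integral_add (integrable_const _) (h1.add h2)
    _ = gradient L θ + ((∫ ω, (∑ i, ε ω i • u i) ∂P) + ∫ ω, (∑ j, η ω j • w j) ∂P) := by
        rw [integral_const, integral_add h1 h2]
        simp
    _ = gradient L θ := by
        rw [integral_finset_sum _ (fun i _ => (hεint i).smul_const (u i)),
          integral_finset_sum _ (fun j _ => (hηint j).smul_const (w j))]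
        simp only [integral_smul_const, hεmean, hηmean, zero_smul, Finset.sum_const_zero]
        simp
end

section
/- In the Gaussian regression model, let ε₁,…,εₙ and η₁,…,ηₘ be integrable real random variables with E[ε_i] = 0 for all i and E[η_j] = 0 for all j, and let L̃ be the (random) perturbed joint log-likelihood built from ε and η. Then for every fixed θ ∈ ℝᵐ: E[⟪∇L(θ), ∇L̃(θ)⟫] = ‖∇L(θ)‖². -/
open MeasureTheory
open scoped BigOperators RealInnerProductSpace

private lemma quad_hasFDerivAt {n m : ℕ} (σ α : ℝ)
    (f : Fin n → EuclideanSpace ℝ (Fin m) → ℝ) (hf : ∀ i, Differentiable ℝ (f i))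
    (c : Fin n → ℝ) (d : Fin m → ℝ) (θ : EuclideanSpace ℝ (Fin m)) :
    HasFDerivAt (fun θ : EuclideanSpace ℝ (Fin m) =>
        -(∑ i, (f i θ - c i) ^ 2 / (2 * σ ^ 2)) - ∑ j, (θ j - d j) ^ 2 / (2 * α ^ 2))
      (-(∑ i, (((2 * σ ^ 2)⁻¹ * (2 * (f i θ - c i))) • fderiv ℝ (f i) θ))
        - ∑ j, (((2 * α ^ 2)⁻¹ * (2 * (θ j - d j))) •
            (EuclideanSpace.proj j : EuclideanSpace ℝ (Fin m) →L[ℝ] ℝ))) θ := by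
  have h1 : ∀ i : Fin n, HasFDerivAt (fun θ => (f i θ - c i) ^ 2 / (2 * σ ^ 2))
      (((2 * σ ^ 2)⁻¹ * (2 * (f i θ - c i))) • fderiv ℝ (f i) θ) θ := by
    intro i
    have hg : HasFDerivAt (fun θ => f i θ - c i) (fderiv ℝ (f i) θ) θ :=
      ((hf i).differentiableAt.hasFDerivAt).sub_const (c i)
    have hsq := (hg.mul hg).const_mul ((2 * σ ^ 2)⁻¹)
    have heq : (fun θ : EuclideanSpace ℝ (Fin m) => (f i θ - c i) ^ 2 / (2 * σ ^ 2))
        = fun θ => (2 * σ ^ 2)⁻¹ * ((f i θ - c i) * (f i θ - c i)) := by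
      funext x; rw [pow_two]; ring
    rw [heq]
    refine hsq.congr_fderiv ?_
    ext v
    simp [ContinuousLinearMap.smul_apply]
    ring
  have h2 : ∀ j : Fin m, HasFDerivAt (fun θ : EuclideanSpace ℝ (Fin m) =>
        (θ j - d j) ^ 2 / (2 * α ^ 2))
      (((2 * α ^ 2)⁻¹ * (2 * (θ j - d j))) •
        (EuclideanSpace.proj j : EuclideanSpace ℝ (Fin m) →L[ℝ] ℝ)) θ := by
    intro j
    have hg : HasFDerivAt (fun θ : EuclideanSpace ℝ (Fin m) => θ j - d j)
        (EuclideanSpace.proj j : EuclideanSpace ℝ (Fin m) →L[ℝ] ℝ) θ :=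
      (EuclideanSpace.proj j : EuclideanSpace ℝ (Fin m) →L[ℝ] ℝ).hasFDerivAt.sub_const (d j)
    have hsq := (hg.mul hg).const_mul ((2 * α ^ 2)⁻¹)
    have heq : (fun θ : EuclideanSpace ℝ (Fin m) => (θ j - d j) ^ 2 / (2 * α ^ 2))
        = fun θ : EuclideanSpace ℝ (Fin m) => (2 * α ^ 2)⁻¹ * ((θ j - d j) * (θ j - d j)) := by
      funext x; rw [pow_two]; ring
    rw [heq]
    refine hsq.congr_fderiv ?_
    ext v
    simp [ContinuousLinearMap.smul_apply]
    ring
  exact (HasFDerivAt.fun_sum fun i _ => h1 i).neg.sub (HasFDerivAt.fun_sum fun j _ => h2 j)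

/-- In the Gaussian regression model, let `ε₁,…,εₙ` and `η₁,…,ηₘ` be
integrable real random variables with zero mean, and let `L̃` be the (random) perturbed
joint log-likelihood built from `ε` and `η`.  Then for every fixed `θ ∈ ℝᵐ`:
`E[⟪∇L θ, ∇L̃ θ⟫] = ‖∇L θ‖²`. -/
theorem expectation_inner_gradient_perturbed_gradient
    {n m : ℕ} (hn : 1 ≤ n) (hm : 1 ≤ m)
    (σ α : ℝ) (hσ : 0 < σ) (hα : 0 < α)
    (y : Fin n → ℝ)
    (f : Fin n → EuclideanSpace ℝ (Fin m) → ℝ)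
    (hf : ∀ i, ContDiff ℝ 2 (f i))
    (L : EuclideanSpace ℝ (Fin m) → ℝ)
    (hL : ∀ θ, L θ = -(∑ i, (f i θ - y i) ^ 2 / (2 * σ ^ 2))
      - ∑ j, (θ j) ^ 2 / (2 * α ^ 2))
    {Ω : Type*} [MeasurableSpace Ω] (P : Measure Ω) [IsProbabilityMeasure P]
    (ε : Ω → Fin n → ℝ) (η : Ω → EuclideanSpace ℝ (Fin m))
    (hεint : ∀ i, Integrable (fun ω => ε ω i) P)
    (hηint : ∀ j, Integrable (fun ω => η ω j) P)
    (hεmean : ∀ i, ∫ ω, ε ω i ∂P = 0)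
    (hηmean : ∀ j, ∫ ω, η ω j ∂P = 0)
    (Lt : Ω → EuclideanSpace ℝ (Fin m) → ℝ)
    (hLt : ∀ ω θ, Lt ω θ = -(∑ i, (f i θ - y i - ε ω i) ^ 2 / (2 * σ ^ 2))
      - ∑ j, (θ j - η ω j) ^ 2 / (2 * α ^ 2)) :
    ∀ θ, ∫ ω, ⟪gradient L θ, gradient (Lt ω) θ⟫ ∂P = ‖gradient L θ‖ ^ 2 := by
  intro θ
  have hσ' : σ ≠ 0 := ne_of_gt hσ
  have hα' : α ≠ 0 := ne_of_gt hα
  have hfd : ∀ i, Differentiable ℝ (f i) := fun i => (hf i).differentiable (by norm_num)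
  -- L has the generic quadratic shape with c = y, d = 0
  have hLeq : L = fun θ : EuclideanSpace ℝ (Fin m) =>
      -(∑ i, (f i θ - y i) ^ 2 / (2 * σ ^ 2)) - ∑ j, (θ j - (0 : Fin m → ℝ) j) ^ 2 / (2 * α ^ 2) := by
    funext x; rw [hL x]; simp
  have hLderiv := quad_hasFDerivAt σ α f hfd y 0 θ
  rw [← hLeq] at hLderiv
  have hLtderiv : ∀ ω, HasFDerivAt (Lt ω)
      (-(∑ i, (((2 * σ ^ 2)⁻¹ * (2 * (f i θ - (fun i => y i + ε ω i) i))) • fderiv ℝ (f i) θ))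
        - ∑ j, (((2 * α ^ 2)⁻¹ * (2 * (θ j - η ω j))) •
            (EuclideanSpace.proj j : EuclideanSpace ℝ (Fin m) →L[ℝ] ℝ))) θ := by
    intro ω
    have heq : Lt ω = fun θ : EuclideanSpace ℝ (Fin m) =>
        -(∑ i, (f i θ - (fun i => y i + ε ω i) i) ^ 2 / (2 * σ ^ 2))
          - ∑ j, (θ j - η ω j) ^ 2 / (2 * α ^ 2) := by
      funext x; rw [hLt ω x]; simp only [sub_sub]
    rw [heq]
    exact quad_hasFDerivAt σ α f hfd (fun i => y i + ε ω i) (η ω) θ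
  set v := gradient L θ with hv
  -- inner products as fderiv applications
  have hgrad_inner : ∀ (F : EuclideanSpace ℝ (Fin m) → ℝ),
      ⟪gradient F θ, v⟫ = fderiv ℝ F θ v := by
    intro F
    simp [gradient, InnerProductSpace.toDual_symm_apply]
  have hnorm : ‖v‖ ^ 2 = fderiv ℝ L θ v := by
    rw [← real_inner_self_eq_norm_sq, ← hgrad_inner L]
  -- pointwise identity for the integrand
  have hpt : ∀ ω, ⟪v, gradient (Lt ω) θ⟫
      = ‖v‖ ^ 2 + ((∑ i, ε ω i * (fderiv ℝ (f i) θ v / σ ^ 2))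
          + ∑ j, η ω j * (v j / α ^ 2)) := by
    intro ω
    rw [real_inner_comm, hgrad_inner, (hLtderiv ω).fderiv, hnorm, hLderiv.fderiv]
    simp only [ContinuousLinearMap.sub_apply, ContinuousLinearMap.neg_apply,
      ContinuousLinearMap.sum_apply, ContinuousLinearMap.smul_apply, smul_eq_mul,
      Pi.zero_apply, sub_zero]
    have hproj : ∀ (j : Fin m), (EuclideanSpace.proj j :
        EuclideanSpace ℝ (Fin m) →L[ℝ] ℝ) v = v j := fun j => rfl
    simp only [hproj]
    have e1 : ∀ i ∈ Finset.univ, (2 * σ ^ 2)⁻¹ * (2 * (f i θ - (y i + ε ω i))) * (fderiv ℝ (f i) θ v)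
        = (2 * σ ^ 2)⁻¹ * (2 * (f i θ - y i)) * (fderiv ℝ (f i) θ v)
          - ε ω i * (fderiv ℝ (f i) θ v / σ ^ 2) := by
      intro i _; field_simp; ring
    have e2 : ∀ j ∈ Finset.univ, (2 * α ^ 2)⁻¹ * (2 * (θ j - η ω j)) * v j
        = (2 * α ^ 2)⁻¹ * (2 * θ j) * v j - η ω j * (v j / α ^ 2) := by
      intro j _; field_simp
    rw [Finset.sum_congr rfl e1, Finset.sum_congr rfl e2,
      Finset.sum_sub_distrib, Finset.sum_sub_distrib]
    ring
  calc ∫ ω, ⟪v, gradient (Lt ω) θ⟫ ∂P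
      = ∫ ω, (‖v‖ ^ 2 + ((∑ i, ε ω i * (fderiv ℝ (f i) θ v / σ ^ 2))
          + ∑ j, η ω j * (v j / α ^ 2))) ∂P := by
        exact integral_congr_ae (Filter.Eventually.of_forall hpt)
    _ = ‖v‖ ^ 2 := by
        have hint1 : Integrable (fun ω => ∑ i, ε ω i * (fderiv ℝ (f i) θ v / σ ^ 2)) P :=
          integrable_finset_sum _ (fun i _ => (hεint i).mul_const _)
        have hint2 : Integrable (fun ω => ∑ j, η ω j * (v j / α ^ 2)) P :=
          integrable_finset_sum _ (fun j _ => (hηint j).mul_const _)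
        have hint12 : Integrable (fun ω => (∑ i, ε ω i * (fderiv ℝ (f i) θ v / σ ^ 2))
            + ∑ j, η ω j * (v j / α ^ 2)) P := hint1.add hint2
        rw [integral_add (integrable_const _) hint12, integral_const]
        rw [integral_add hint1 hint2]
        rw [integral_finset_sum _ (fun i _ => (hεint i).mul_const _)]
        rw [integral_finset_sum _ (fun j _ => (hηint j).mul_const _)]
        simp [integral_mul_const, hεmean, hηmean]
end

section
/- (Gradient-norm decomposition, Lemma 1 of the appendix up to rearrangement) In the Gaussian regression model, let ε₁,…,εₙ, η₁,…,ηₘ be mutually independent square-integrable real random variables with E[ε_i] = 0, E[ε_i²] = σ², E[η_j] = 0, E[η_j²] = α², and let L̃ be the (random) perturbed joint log-likelihood built from ε and η. Then for every fixed θ ∈ ℝᵐ: E[‖∇L̃(θ)‖²] = ‖∇L(θ)‖² + (1/σ²)·Σ_{i=1}^n ‖∇f_i(θ)‖² + m/α². -/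
open MeasureTheory ProbabilityTheory InnerProductSpace
open scoped BigOperators

lemma grad_formula_aux {n m : ℕ} (σ α : ℝ) (hσ : σ ≠ 0) (hα : α ≠ 0)
    (y e : Fin n → ℝ) (f : Fin n → EuclideanSpace ℝ (Fin m) → ℝ)
    (hf : ∀ i, Differentiable ℝ (f i)) (h θ : EuclideanSpace ℝ (Fin m)) :
    gradient (fun θ => -(∑ i, (f i θ - y i - e i) ^ 2 / (2 * σ ^ 2))
      - ∑ j, (θ j - h j) ^ 2 / (2 * α ^ 2)) θ
    = -((σ ^ 2)⁻¹ • ∑ i, (f i θ - y i - e i) • gradient (f i) θ)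
      - (α ^ 2)⁻¹ • (θ - h) := by
  have hproj : ∀ j : Fin m, HasFDerivAt (fun x : EuclideanSpace ℝ (Fin m) => x j)
      (EuclideanSpace.proj j : EuclideanSpace ℝ (Fin m) →L[ℝ] ℝ) θ := fun j =>
    ((EuclideanSpace.proj j : EuclideanSpace ℝ (Fin m) →L[ℝ] ℝ)).hasFDerivAt
  have hA : ∀ i : Fin n, HasFDerivAt
      (fun x => (f i x - y i - e i) ^ 2 / (2 * σ ^ 2))
      ((((f i θ - y i - e i)) / σ ^ 2) • fderiv ℝ (f i) θ) θ := by
    intro i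
    have hu : HasFDerivAt (fun x => f i x - y i - e i) (fderiv ℝ (f i) θ) θ :=
      ((hf i θ).hasFDerivAt.sub_const (y i)).sub_const (e i)
    have h2 := (hu.mul hu).const_mul ((2 * σ ^ 2)⁻¹)
    have heq : (fun x => (f i x - y i - e i) ^ 2 / (2 * σ ^ 2))
        = fun x => (2 * σ ^ 2)⁻¹ * ((f i x - y i - e i) * (f i x - y i - e i)) := by
      funext x; rw [sq, div_eq_inv_mul]
    rw [heq]
    refine h2.congr_fderiv ?_
    ext w
    simp only [ContinuousLinearMap.smul_apply, ContinuousLinearMap.add_apply,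
      ContinuousLinearMap.coe_smul', Pi.smul_apply, smul_eq_mul]
    have : ((2:ℝ) * σ ^ 2) ≠ 0 := by positivity
    field_simp
    ring
  have hB : ∀ j : Fin m, HasFDerivAt
      (fun x : EuclideanSpace ℝ (Fin m) => (x j - h j) ^ 2 / (2 * α ^ 2))
      (((θ j - h j) / α ^ 2) • (EuclideanSpace.proj j : EuclideanSpace ℝ (Fin m) →L[ℝ] ℝ)) θ := by
    intro j
    have hu : HasFDerivAt (fun x : EuclideanSpace ℝ (Fin m) => x j - h j)
        (EuclideanSpace.proj j : EuclideanSpace ℝ (Fin m) →L[ℝ] ℝ) θ :=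
      (hproj j).sub_const (h j)
    have h2 := (hu.mul hu).const_mul ((2 * α ^ 2)⁻¹)
    have heq : (fun x : EuclideanSpace ℝ (Fin m) => (x j - h j) ^ 2 / (2 * α ^ 2))
        = fun x => (2 * α ^ 2)⁻¹ * ((x j - h j) * (x j - h j)) := by
      funext x; rw [sq, div_eq_inv_mul]
    rw [heq]
    refine h2.congr_fderiv ?_
    ext w
    simp only [ContinuousLinearMap.smul_apply, ContinuousLinearMap.add_apply,
      ContinuousLinearMap.coe_smul', Pi.smul_apply, smul_eq_mul]
    field_simp
    ring
  have hD : HasFDerivAt (fun θ => -(∑ i, (f i θ - y i - e i) ^ 2 / (2 * σ ^ 2))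
      - ∑ j, (θ j - h j) ^ 2 / (2 * α ^ 2))
      ((-(∑ i, ((f i θ - y i - e i) / σ ^ 2) • fderiv ℝ (f i) θ))
        - ∑ j, ((θ j - h j) / α ^ 2) • (EuclideanSpace.proj j : EuclideanSpace ℝ (Fin m) →L[ℝ] ℝ)) θ :=
    ((HasFDerivAt.fun_sum (fun i _ => hA i)).neg).sub (HasFDerivAt.fun_sum (fun j _ => hB j))
  rw [gradient, hD.fderiv]
  have hfd : ∀ i, (toDual ℝ (EuclideanSpace ℝ (Fin m))).symm (fderiv ℝ (f i) θ)
      = gradient (f i) θ := fun i => rfl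
  have hprojd : ∀ j : Fin m, (toDual ℝ (EuclideanSpace ℝ (Fin m))).symm
      (EuclideanSpace.proj j : EuclideanSpace ℝ (Fin m) →L[ℝ] ℝ)
      = EuclideanSpace.single j (1:ℝ) := by
    intro j
    apply (toDual ℝ (EuclideanSpace ℝ (Fin m))).injective
    rw [LinearIsometryEquiv.apply_symm_apply]
    ext w
    simp [toDual_apply_apply, EuclideanSpace.inner_single_left]
  rw [map_sub, map_neg, map_sum, map_sum]
  simp only [_root_.map_smul, hfd, hprojd]
  congr 1
  · have h1 : (σ ^ 2)⁻¹ • ∑ i, (f i θ - y i - e i) • gradient (f i) θ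
        = ∑ i, (σ ^ 2)⁻¹ • ((f i θ - y i - e i) • gradient (f i) θ) := Finset.smul_sum
    rw [h1, neg_inj]
    exact Finset.sum_congr rfl fun i _ => by rw [smul_smul, div_eq_inv_mul]
  · have hbasis : ∑ j, (θ j - h j) • EuclideanSpace.single j (1:ℝ) = θ - h := by
      ext k
      have := map_sum (EuclideanSpace.proj (𝕜 := ℝ) k)
        (fun j => (θ j - h j) • EuclideanSpace.single j (1:ℝ)) Finset.univ
      rw [show ((∑ j, (θ j - h j) • EuclideanSpace.single j (1:ℝ)) k)
          = ∑ j, ((θ j - h j) • EuclideanSpace.single j (1:ℝ)) k from this]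
      simp [EuclideanSpace.single_apply]
    rw [← hbasis]
    have h2 : (α ^ 2)⁻¹ • ∑ j, (θ j - h j) • EuclideanSpace.single j (1:ℝ)
        = ∑ j, (α ^ 2)⁻¹ • ((θ j - h j) • EuclideanSpace.single j (1:ℝ)) := Finset.smul_sum
    rw [h2]
    exact Finset.sum_congr rfl fun j _ => by rw [smul_smul, div_eq_inv_mul]

lemma norm_add_add_sq_real {F : Type*} [NormedAddCommGroup F] [InnerProductSpace ℝ F]
    (G u v : F) : ‖G + u + v‖ ^ 2
      = ‖G‖ ^ 2 + inner ℝ u u + inner ℝ v v + 2 * inner ℝ G u + 2 * inner ℝ G v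
        + 2 * (inner ℝ u v : ℝ) := by
  rw [norm_add_sq_real, norm_add_sq_real, inner_add_left, real_inner_self_eq_norm_sq,
    real_inner_self_eq_norm_sq]
  ring

/-- **gradient-norm decomposition, Lemma 1 of the appendix up to
rearrangement.** In the Gaussian regression model, let `ε₁,…,εₙ, η₁,…,ηₘ` be mutually
independent square-integrable real random variables with `E[εᵢ] = 0`, `E[εᵢ²] = σ²`,
`E[ηⱼ] = 0`, `E[ηⱼ²] = α²`, and let `L̃` be the (random) perturbed joint log-likelihood
built from `ε` and `η`.  Then for every fixed `θ ∈ ℝᵐ`: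
`E[‖∇L̃ θ‖²] = ‖∇L θ‖² + (1/σ²) Σᵢ ‖∇fᵢ θ‖² + m/α²`. -/
theorem expectation_perturbed_gradient_norm_sq
    {n m : ℕ} (hn : 1 ≤ n) (hm : 1 ≤ m)
    (σ α : ℝ) (hσ : 0 < σ) (hα : 0 < α)
    (y : Fin n → ℝ)
    (f : Fin n → EuclideanSpace ℝ (Fin m) → ℝ)
    (hf : ∀ i, ContDiff ℝ 2 (f i))
    (L : EuclideanSpace ℝ (Fin m) → ℝ)
    (hL : ∀ θ, L θ = -(∑ i, (f i θ - y i) ^ 2 / (2 * σ ^ 2))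
      - ∑ j, (θ j) ^ 2 / (2 * α ^ 2))
    {Ω : Type*} [MeasurableSpace Ω] (P : Measure Ω) [IsProbabilityMeasure P]
    (ε : Ω → Fin n → ℝ) (η : Ω → EuclideanSpace ℝ (Fin m))
    (hεsq : ∀ i, MemLp (fun ω => ε ω i) 2 P)
    (hηsq : ∀ j, MemLp (fun ω => η ω j) 2 P)
    (hindep : iIndepFun
      (Sum.elim (fun i ω => ε ω i) (fun j ω => η ω j)) P)
    (hεmean : ∀ i, ∫ ω, ε ω i ∂P = 0)
    (hηmean : ∀ j, ∫ ω, η ω j ∂P = 0)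
    (hεvar : ∀ i, ∫ ω, (ε ω i) ^ 2 ∂P = σ ^ 2)
    (hηvar : ∀ j, ∫ ω, (η ω j) ^ 2 ∂P = α ^ 2)
    (Lt : Ω → EuclideanSpace ℝ (Fin m) → ℝ)
    (hLt : ∀ ω θ, Lt ω θ = -(∑ i, (f i θ - y i - ε ω i) ^ 2 / (2 * σ ^ 2))
      - ∑ j, (θ j - η ω j) ^ 2 / (2 * α ^ 2)) :
    ∀ θ, ∫ ω, ‖gradient (Lt ω) θ‖ ^ 2 ∂P =
      ‖gradient L θ‖ ^ 2 + (1 / σ ^ 2) * ∑ i, ‖gradient (f i) θ‖ ^ 2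
        + (m : ℝ) / α ^ 2 := by
  intro θ
  have hσ' : σ ≠ 0 := ne_of_gt hσ
  have hα' : α ≠ 0 := ne_of_gt hα
  have hdiff : ∀ i, Differentiable ℝ (f i) := fun i => (hf i).differentiable two_ne_zero
  set G : EuclideanSpace ℝ (Fin m) := gradient L θ with hG
  set g : Fin n → EuclideanSpace ℝ (Fin m) := fun i => gradient (f i) θ with hg
  -- gradient of L
  have hgradL : G = -((σ ^ 2)⁻¹ • ∑ i, (f i θ - y i) • g i) - (α ^ 2)⁻¹ • θ := by
    have h0 := grad_formula_aux σ α hσ' hα' y (fun _ => 0) f hdiff 0 θ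
    have hLeq : L = (fun θ' => -(∑ i, (f i θ' - y i - (fun _ : Fin n => (0:ℝ)) i) ^ 2 / (2 * σ ^ 2))
        - ∑ j, (θ' j - (0 : EuclideanSpace ℝ (Fin m)) j) ^ 2 / (2 * α ^ 2)) := by
      funext θ'
      rw [hL θ']
      norm_num
    rw [hG, hLeq, h0]
    norm_num
    rfl
  -- gradient of Lt
  have hgradLt : ∀ ω, gradient (Lt ω) θ
      = G + (σ ^ 2)⁻¹ • ∑ i, ε ω i • g i + (α ^ 2)⁻¹ • η ω := by
    intro ω
    have h0 := grad_formula_aux σ α hσ' hα' y (ε ω) f hdiff (η ω) θ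
    have hLteq : Lt ω = (fun θ' => -(∑ i, (f i θ' - y i - ε ω i) ^ 2 / (2 * σ ^ 2))
        - ∑ j, (θ' j - η ω j) ^ 2 / (2 * α ^ 2)) := funext fun θ' => hLt ω θ'
    rw [hLteq, h0, hgradL]
    have hsum : ∑ i, (f i θ - y i - ε ω i) • g i
        = ∑ i, (f i θ - y i) • g i - ∑ i, ε ω i • g i := by
      rw [← Finset.sum_sub_distrib]
      exact Finset.sum_congr rfl fun i _ => sub_smul _ _ _
    rw [hsum]
    module
  -- scalar abbreviations
  set c : Fin n → ℝ := fun i => (inner ℝ G (g i) : ℝ) with hc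
  set d : Fin n → Fin n → ℝ := fun i k => (inner ℝ (g i) (g k) : ℝ) with hd
  -- pointwise expansion of the squared norm
  have hGu : ∀ ω, (inner ℝ G ((σ ^ 2)⁻¹ • ∑ i, ε ω i • g i) : ℝ)
      = (σ ^ 2)⁻¹ * ∑ i, c i * ε ω i := by
    intro ω
    rw [real_inner_smul_right, inner_sum]
    congr 1
    exact Finset.sum_congr rfl fun i _ => by rw [real_inner_smul_right]; ring
  have huu : ∀ ω, (inner ℝ ((σ ^ 2)⁻¹ • ∑ i, ε ω i • g i) ((σ ^ 2)⁻¹ • ∑ k, ε ω k • g k) : ℝ)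
      = (σ ^ 2)⁻¹ * (σ ^ 2)⁻¹ * ∑ i, ∑ k, d i k * (ε ω i * ε ω k) := by
    intro ω
    rw [real_inner_smul_left, real_inner_smul_right, sum_inner]
    rw [mul_assoc]
    congr 2
    refine Finset.sum_congr rfl fun i _ => ?_
    rw [real_inner_smul_left, inner_sum, Finset.mul_sum]
    refine Finset.sum_congr rfl fun k _ => ?_
    rw [real_inner_smul_right]
    ring
  have hGv : ∀ ω, (inner ℝ G ((α ^ 2)⁻¹ • η ω) : ℝ)
      = (α ^ 2)⁻¹ * ∑ j, G j * η ω j := by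
    intro ω
    rw [real_inner_smul_right]
    congr 1
    simp [PiLp.inner_apply, RCLike.inner_apply, starRingEnd_apply]
    exact Finset.sum_congr rfl fun j _ => mul_comm _ _
  have huv : ∀ ω, (inner ℝ ((σ ^ 2)⁻¹ • ∑ i, ε ω i • g i) ((α ^ 2)⁻¹ • η ω) : ℝ)
      = (σ ^ 2)⁻¹ * (α ^ 2)⁻¹ * ∑ i, ∑ j, g i j * (ε ω i * η ω j) := by
    intro ω
    rw [real_inner_smul_left, real_inner_smul_right, sum_inner, mul_assoc]
    congr 2
    refine Finset.sum_congr rfl fun i _ => ?_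
    rw [real_inner_smul_left]
    have : (inner ℝ (g i) (η ω) : ℝ) = ∑ j, g i j * η ω j := by
      simp [PiLp.inner_apply, RCLike.inner_apply, starRingEnd_apply]
      exact Finset.sum_congr rfl fun j _ => mul_comm _ _
    rw [this, Finset.mul_sum]
    refine Finset.sum_congr rfl fun j _ => ?_
    ring
  have hvv : ∀ ω, (inner ℝ ((α ^ 2)⁻¹ • η ω) ((α ^ 2)⁻¹ • η ω) : ℝ)
      = (α ^ 2)⁻¹ * (α ^ 2)⁻¹ * ∑ j, η ω j * η ω j := by
    intro ω
    rw [real_inner_smul_left, real_inner_smul_right, mul_assoc]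
    congr 2
  have hpt : ∀ ω, ‖gradient (Lt ω) θ‖ ^ 2
      = ‖G‖ ^ 2
        + (σ ^ 2)⁻¹ * (σ ^ 2)⁻¹ * ∑ i, ∑ k, d i k * (ε ω i * ε ω k)
        + (α ^ 2)⁻¹ * (α ^ 2)⁻¹ * ∑ j, η ω j * η ω j
        + 2 * ((σ ^ 2)⁻¹ * ∑ i, c i * ε ω i)
        + 2 * ((α ^ 2)⁻¹ * ∑ j, G j * η ω j)
        + 2 * ((σ ^ 2)⁻¹ * (α ^ 2)⁻¹ * ∑ i, ∑ j, g i j * (ε ω i * η ω j)) := by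
    intro ω
    rw [hgradLt ω, norm_add_add_sq_real, hGu ω, huu ω, hGv ω, huv ω, hvv ω]
  -- integrability facts
  have Iε : ∀ i, Integrable (fun ω => ε ω i) P := fun i => (hεsq i).integrable one_le_two
  have Iη : ∀ j, Integrable (fun ω => η ω j) P := fun j => (hηsq j).integrable one_le_two
  have Imul : ∀ (u v : Ω → ℝ), MemLp u 2 P → MemLp v 2 P →
      Integrable (fun ω => u ω * v ω) P := by
    intro u v hu hv
    have h12 : (1 : ENNReal) / 1 = 1 / 2 + 1 / 2 := by
      rw [ENNReal.div_add_div_same, one_add_one_eq_two,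
        ENNReal.div_self (by norm_num) (by norm_num),
        ENNReal.div_self (by norm_num) (by norm_num)]
    have := (MemLp.smul (φ := u) (r := 1) hv hu).integrable le_rfl
    exact this
  have Iεε : ∀ i k, Integrable (fun ω => ε ω i * ε ω k) P :=
    fun i k => Imul _ _ (hεsq i) (hεsq k)
  have Iεη : ∀ i j, Integrable (fun ω => ε ω i * η ω j) P :=
    fun i j => Imul _ _ (hεsq i) (hηsq j)
  have Iηη : ∀ j, Integrable (fun ω => η ω j * η ω j) P :=
    fun j => Imul _ _ (hηsq j) (hηsq j)
  have I1 : Integrable (fun ω => ∑ i, c i * ε ω i) P :=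
    integrable_finset_sum _ fun i _ => (Iε i).const_mul _
  have I2 : Integrable (fun ω => ∑ i, ∑ k, d i k * (ε ω i * ε ω k)) P :=
    integrable_finset_sum _ fun i _ =>
      integrable_finset_sum _ fun k _ => (Iεε i k).const_mul _
  have I3 : Integrable (fun ω => ∑ j, G j * η ω j) P :=
    integrable_finset_sum _ fun j _ => (Iη j).const_mul _
  have I4 : Integrable (fun ω => ∑ i, ∑ j, g i j * (ε ω i * η ω j)) P :=
    integrable_finset_sum _ fun i _ =>
      integrable_finset_sum _ fun j _ => (Iεη i j).const_mul _
  have I5 : Integrable (fun ω => ∑ j, η ω j * η ω j) P :=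
    integrable_finset_sum _ fun j _ => Iηη j
  -- covariance computations
  have hEεε : ∀ i k, ∫ ω, ε ω i * ε ω k ∂P = if i = k then σ ^ 2 else 0 := by
    intro i k
    by_cases hik : i = k
    · subst hik
      rw [if_pos rfl]
      simp_rw [← pow_two]
      exact hεvar i
    · rw [if_neg hik]
      have hne : (Sum.inl i : Fin n ⊕ Fin m) ≠ Sum.inl k := by simpa using hik
      have hid := hindep.indepFun hne
      simp only [Sum.elim_inl] at hid
      have := IndepFun.integral_fun_mul_eq_mul_integral hid (Iε i).1 (Iε k).1
      simpa [hεmean i] using this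
  have hEεη : ∀ i j, ∫ ω, ε ω i * η ω j ∂P = 0 := by
    intro i j
    have hne : (Sum.inl i : Fin n ⊕ Fin m) ≠ Sum.inr j := by simp
    have hid := hindep.indepFun hne
    simp only [Sum.elim_inl, Sum.elim_inr] at hid
    have := IndepFun.integral_fun_mul_eq_mul_integral hid (Iε i).1 (Iη j).1
    simpa [hεmean i] using this
  have hEηη : ∀ j, ∫ ω, η ω j * η ω j ∂P = α ^ 2 := by
    intro j
    simp_rw [← pow_two]
    exact hηvar j
  -- evaluate the integrals of the six pieces
  have E1 : ∫ ω, ∑ i, c i * ε ω i ∂P = 0 := by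
    rw [integral_finset_sum _ fun i _ => (Iε i).const_mul _]
    simp [integral_const_mul, hεmean]
  have E2 : ∫ ω, ∑ i, ∑ k, d i k * (ε ω i * ε ω k) ∂P = (∑ i, d i i) * σ ^ 2 := by
    rw [integral_finset_sum _ fun i _ =>
      integrable_finset_sum _ fun k _ => (Iεε i k).const_mul _]
    have hrow : ∀ i, ∫ ω, ∑ k, d i k * (ε ω i * ε ω k) ∂P = d i i * σ ^ 2 := by
      intro i
      rw [integral_finset_sum _ fun k _ => (Iεε i k).const_mul _]
      simp_rw [integral_const_mul, hEεε]
      simp [mul_ite, Finset.sum_ite_eq]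
    simp_rw [hrow]
    rw [← Finset.sum_mul]
  have E3 : ∫ ω, ∑ j, G j * η ω j ∂P = 0 := by
    rw [integral_finset_sum _ fun j _ => (Iη j).const_mul _]
    simp [integral_const_mul, hηmean]
  have E4 : ∫ ω, ∑ i, ∑ j, g i j * (ε ω i * η ω j) ∂P = 0 := by
    rw [integral_finset_sum _ fun i _ =>
      integrable_finset_sum _ fun j _ => (Iεη i j).const_mul _]
    have hrow : ∀ i, ∫ ω, ∑ j, g i j * (ε ω i * η ω j) ∂P = 0 := by
      intro i
      rw [integral_finset_sum _ fun j _ => (Iεη i j).const_mul _]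
      simp [integral_const_mul, hEεη]
    simp [hrow]
  have E5 : ∫ ω, ∑ j, η ω j * η ω j ∂P = (m : ℝ) * α ^ 2 := by
    rw [integral_finset_sum _ fun j _ => Iηη j]
    simp [hEηη, Finset.sum_const, Finset.card_univ]
  -- assemble
  have J2 : Integrable (fun ω =>
      (σ ^ 2)⁻¹ * (σ ^ 2)⁻¹ * ∑ i, ∑ k, d i k * (ε ω i * ε ω k)) P := I2.const_mul _
  have J5 : Integrable (fun ω =>
      (α ^ 2)⁻¹ * (α ^ 2)⁻¹ * ∑ j, η ω j * η ω j) P := I5.const_mul _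
  have J1 : Integrable (fun ω => 2 * ((σ ^ 2)⁻¹ * ∑ i, c i * ε ω i)) P :=
    (I1.const_mul _).const_mul _
  have J3 : Integrable (fun ω => 2 * ((α ^ 2)⁻¹ * ∑ j, G j * η ω j)) P :=
    (I3.const_mul _).const_mul _
  have J4 : Integrable (fun ω =>
      2 * ((σ ^ 2)⁻¹ * (α ^ 2)⁻¹ * ∑ i, ∑ j, g i j * (ε ω i * η ω j))) P :=
    (I4.const_mul _).const_mul _
  have h0 : Integrable (fun _ : Ω => ‖G‖ ^ 2) P := integrable_const _
  have K1 : Integrable (fun ω => ‖G‖ ^ 2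
      + (σ ^ 2)⁻¹ * (σ ^ 2)⁻¹ * ∑ i, ∑ k, d i k * (ε ω i * ε ω k)) P := h0.add J2
  have K2 : Integrable (fun ω => ‖G‖ ^ 2
      + (σ ^ 2)⁻¹ * (σ ^ 2)⁻¹ * ∑ i, ∑ k, d i k * (ε ω i * ε ω k)
      + (α ^ 2)⁻¹ * (α ^ 2)⁻¹ * ∑ j, η ω j * η ω j) P := K1.add J5
  have K3 : Integrable (fun ω => ‖G‖ ^ 2
      + (σ ^ 2)⁻¹ * (σ ^ 2)⁻¹ * ∑ i, ∑ k, d i k * (ε ω i * ε ω k)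
      + (α ^ 2)⁻¹ * (α ^ 2)⁻¹ * ∑ j, η ω j * η ω j
      + 2 * ((σ ^ 2)⁻¹ * ∑ i, c i * ε ω i)) P := K2.add J1
  have K4 : Integrable (fun ω => ‖G‖ ^ 2
      + (σ ^ 2)⁻¹ * (σ ^ 2)⁻¹ * ∑ i, ∑ k, d i k * (ε ω i * ε ω k)
      + (α ^ 2)⁻¹ * (α ^ 2)⁻¹ * ∑ j, η ω j * η ω j
      + 2 * ((σ ^ 2)⁻¹ * ∑ i, c i * ε ω i)
      + 2 * ((α ^ 2)⁻¹ * ∑ j, G j * η ω j)) P := K3.add J3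
  rw [integral_congr_ae (Filter.Eventually.of_forall hpt)]
  rw [integral_add K4 J4,
    integral_add K3 J3,
    integral_add K2 J1,
    integral_add K1 J5,
    integral_add h0 J2,
    integral_const]
  simp only [integral_const_mul]
  rw [E1, E2, E3, E4, E5]
  have hdsum : (∑ i, d i i) = ∑ i, ‖g i‖ ^ 2 :=
    Finset.sum_congr rfl fun i _ => real_inner_self_eq_norm_sq _
  rw [hdsum]
  simp only [measure_univ, probReal_univ, ENNReal.toReal_one, smul_eq_mul, one_mul, mul_zero]
  
  field_simp
  ring
end
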